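/- Let ζ ∈ (-1/2, ∞) and α ∈ (0,2). Then there exists a constant C > 0 (depending only on ζ and α) such that for all τ > 0 and all 0 < z ≤ s/2: p_ζ^{(α)}(τ,z,s) ≤ C · τ / (s^{2ζ+1+α} + τ^{(2ζ+1+α)/α}), and moreover p_ζ^{(α)}(τ,z,s) ≤ C · s^{-(2ζ+1)}. -/

import Mathlib

open MeasureTheory Real Set Filter
open scoped ENNReal

/-- Modified Bessel function of the first kind of order `ν`. -/
noncomputable def besselI (ν x : ℝ) : ℝ :=
  ∑' k : ℕ, (x / 2) ^ (2 * (k : ℝ) + ν) / ((Nat.factorial k : ℝ) * Real.Gamma ((k : ℝ) + ν + 1))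

/-- The Bessel heat kernel `p_ζ^{(2)}(t,r,s)`. -/
noncomputable def besselHeat (ζ t r s : ℝ) : ℝ :=
  (r * s) ^ ((1 : ℝ) / 2 - ζ) / (2 * t) * Real.exp (-(r ^ 2 + s ^ 2) / (4 * t)) *
    besselI (ζ - 1 / 2) (r * s / (2 * t))

/-- `σ` is a family of `α/2`-stable subordinator densities. -/
def IsStableSubordinatorDensity (α : ℝ) (σ : ℝ → ℝ → ℝ) : Prop :=
  (∀ t, 0 < t → ∀ τ, 0 < τ → 0 ≤ σ t τ) ∧
  (∀ t, 0 < t → Measurable (σ t)) ∧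
  (∀ t l : ℝ, 0 < t → 0 ≤ l →
    (∫ τ in Ioi (0 : ℝ), Real.exp (-τ * l) * σ t τ) = Real.exp (-t * l ^ (α / 2)))

/-- The `α/2`-subordinated Bessel heat kernel `p_ζ^{(α)}(t,r,s)`. -/
noncomputable def subKernel (ζ : ℝ) (σ : ℝ → ℝ → ℝ) (t r s : ℝ) : ℝ :=
  ∫ τ in Ioi (0 : ℝ), besselHeat ζ τ r s * σ t τ


lemma factorial_ineq (k : ℕ) : 2 * (2*k+1).factorial ≤ 4^(k+1) * ((k+1).factorial * k.factorial) := by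
  induction k with
  | zero => simp [Nat.factorial]
  | succ n ih =>
    have h1 : (2*(n+1)+1).factorial = (2*n+3) * ((2*n+2) * (2*n+1).factorial) := by
      have : 2*(n+1)+1 = (2*n+2)+1 := by ring
      rw [this, Nat.factorial_succ, show 2*n+2 = (2*n+1)+1 from by ring, Nat.factorial_succ]
    calc 2 * (2*(n+1)+1).factorial = (2*n+3) * (2*n+2) * (2 * (2*n+1).factorial) := by
          rw [h1]; ring
      _ ≤ (2*n+3) * (2*n+2) * (4^(n+1) * ((n+1).factorial * n.factorial)) := by
          exact Nat.mul_le_mul_left _ ih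
      _ ≤ 4^(n+2) * ((n+2).factorial * (n+1).factorial) := by
          rw [Nat.factorial_succ (n+1), pow_succ]
          calc (2*n+3) * (2*n+2) * (4^(n+1) * ((n+1).factorial * n.factorial))
              = ((2*n+3) * (2*n+2)) * 4^(n+1) * (n+1).factorial * n.factorial := by ring
            _ ≤ ((2*n+4) * (2*n+2)) * 4^(n+1) * (n+1).factorial * n.factorial := by
                have : (2*n+3) * (2*n+2) ≤ (2*n+4)*(2*n+2) := by nlinarith
                exact Nat.mul_le_mul_right _ (Nat.mul_le_mul_right _ (Nat.mul_le_mul_right _ this))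
            _ = 4^(n+1) * 4 * ((n + 2) * (n+1).factorial * ((n+1) * n.factorial)) := by ring
            _ = 4 ^ (n + 1) * 4 * ((n + 2) * (n + 1).factorial * (n + 1).factorial) := by
                rw [Nat.factorial_succ n]
            _ = 4 ^ (n + 1) * 4 * ((n + 2) * (n + 1).factorial * (n + 1).factorial) := rfl

lemma Gamma_fact_le (ν : ℝ) (hν : -1 < ν) : ∀ k : ℕ,
    Real.Gamma (ν+2) * (Nat.factorial k : ℝ) ≤ Real.Gamma ((k:ℝ) + 1 + ν + 1) := by
  intro k
  induction k with
  | zero =>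
    simp only [Nat.factorial_zero, Nat.cast_one, mul_one, Nat.cast_zero]
    rw [show (0:ℝ) + 1 + ν + 1 = ν + 2 by ring]
  | succ n ih =>
    have hpos : (0:ℝ) < (n:ℝ) + 1 + ν + 1 := by linarith [Nat.cast_nonneg (α := ℝ) n]
    have hG : Real.Gamma ((↑(n+1):ℝ) + 1 + ν + 1) = ((n:ℝ)+1+ν+1) * Real.Gamma ((n:ℝ)+1+ν+1) := by
      rw [show ((↑(n+1):ℝ)) + 1 + ν + 1 = ((n:ℝ)+1+ν+1) + 1 by push_cast; ring]
      exact Real.Gamma_add_one hpos.ne'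
    rw [hG]
    have hGpos : 0 < Real.Gamma ((n:ℝ)+1+ν+1) := Real.Gamma_pos_of_pos hpos
    calc Real.Gamma (ν+2) * (Nat.factorial (n+1) : ℝ)
        = ((n:ℝ)+1) * (Real.Gamma (ν+2) * (Nat.factorial n : ℝ)) := by
          rw [Nat.factorial_succ]; push_cast; ring
      _ ≤ ((n:ℝ)+1) * Real.Gamma ((n:ℝ)+1+ν+1) := by
          apply mul_le_mul_of_nonneg_left ih (by positivity)
      _ ≤ ((n:ℝ)+1+ν+1) * Real.Gamma ((n:ℝ)+1+ν+1) := by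
          apply mul_le_mul_of_nonneg_right (by linarith) hGpos.le

lemma besselI_nonneg (ν x : ℝ) (hx : 0 ≤ x) (hν : -1 < ν) : 0 ≤ besselI ν x := by
  apply tsum_nonneg
  intro k
  apply div_nonneg (Real.rpow_nonneg (by linarith) _)
  have : (0:ℝ) < (k:ℝ) + ν + 1 := by
    have : (0:ℝ) ≤ (k:ℝ) := Nat.cast_nonneg k
    linarith
  positivity


lemma odd_sum_le_exp (y : ℝ) (hy : 0 ≤ y) (m : ℕ) :
    ∑ i ∈ Finset.range m, y^(2*i+1) / (Nat.factorial (2*i+1) : ℝ) ≤ Real.exp y := by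
  have hinj : Function.Injective (fun i : ℕ => 2*i+1) := fun a b h => by simp only [] at h; omega
  have h1 : ∑ i ∈ Finset.range m, y^(2*i+1) / (Nat.factorial (2*i+1) : ℝ)
      = ∑ j ∈ (Finset.range m).image (fun i => 2*i+1), y^j / (Nat.factorial j : ℝ) := by
    rw [Finset.sum_image (fun a _ b _ h => hinj h)]
  rw [h1]
  have h2 : (Finset.range m).image (fun i => 2*i+1) ⊆ Finset.range (2*m+2) := by
    intro j hj
    simp only [Finset.mem_image, Finset.mem_range] at hj ⊢
    obtain ⟨i, hi, rfl⟩ := hj; omega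
  calc ∑ j ∈ (Finset.range m).image (fun i => 2*i+1), y^j / (Nat.factorial j : ℝ)
      ≤ ∑ j ∈ Finset.range (2*m+2), y^j / (Nat.factorial j : ℝ) := by
        apply Finset.sum_le_sum_of_subset_of_nonneg h2
        intro j _ _; positivity
    _ ≤ Real.exp y := Real.sum_le_exp_of_nonneg hy _

lemma besselI_le (ν x : ℝ) (hν : -1 < ν) (hx : 0 < x) :
    besselI ν x ≤ (x/2)^ν / Real.Gamma (ν+1) + (x/2)^(ν+1) * Real.exp x / Real.Gamma (ν+2) := by
  set A : ℝ := x/2 with hA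
  have hA0 : 0 < A := by positivity
  have hG1 : 0 < Real.Gamma (ν+1) := Real.Gamma_pos_of_pos (by linarith)
  have hG2 : 0 < Real.Gamma (ν+2) := Real.Gamma_pos_of_pos (by linarith)
  set f : ℕ → ℝ := fun k => A ^ (2 * (k : ℝ) + ν) / ((Nat.factorial k : ℝ) * Real.Gamma ((k : ℝ) + ν + 1)) with hf
  have hfnn : ∀ k, 0 ≤ f k := by
    intro k
    apply div_nonneg (Real.rpow_nonneg hA0.le _)
    have : (0:ℝ) < (k:ℝ) + ν + 1 := by
      have : (0:ℝ) ≤ (k:ℝ) := Nat.cast_nonneg k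
      linarith
    positivity
  have key : ∀ i : ℕ, f (i+1) ≤ A^(ν+1) / Real.Gamma (ν+2) * ((2*A)^(2*i+1) / (Nat.factorial (2*i+1) : ℝ)) := by
    intro i
    have hsplit : A ^ (2 * ((i:ℝ)+1) + ν) = A^(ν+1) * A^(2*i+1) := by
      rw [show 2 * ((i:ℝ)+1) + ν = (ν+1) + ((2*i+1 : ℕ) : ℝ) by push_cast; ring,
        Real.rpow_add hA0, Real.rpow_natCast]
    have hden : Real.Gamma (ν+2) * ((Nat.factorial (i+1) : ℝ) * (Nat.factorial i : ℝ))
        ≤ (Nat.factorial (i+1) : ℝ) * Real.Gamma ((i:ℝ)+1+ν+1) := by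
      calc Real.Gamma (ν+2) * ((Nat.factorial (i+1) : ℝ) * (Nat.factorial i : ℝ))
          = (Nat.factorial (i+1) : ℝ) * (Real.Gamma (ν+2) * (Nat.factorial i : ℝ)) := by ring
        _ ≤ (Nat.factorial (i+1) : ℝ) * Real.Gamma ((i:ℝ)+1+ν+1) := by
            apply mul_le_mul_of_nonneg_left (Gamma_fact_le ν hν i) (by positivity)
    have hfac : (2:ℝ) * (Nat.factorial (2*i+1) : ℝ) ≤ 4^(i+1) * ((Nat.factorial (i+1) : ℝ) * (Nat.factorial i : ℝ)) := by
      have := factorial_ineq i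
      calc (2:ℝ) * (Nat.factorial (2*i+1) : ℝ) = ((2 * (2*i+1).factorial : ℕ) : ℝ) := by push_cast; ring
        _ ≤ ((4^(i+1) * ((i+1).factorial * i.factorial) : ℕ) : ℝ) := Nat.cast_le.2 this
        _ = 4^(i+1) * ((Nat.factorial (i+1) : ℝ) * (Nat.factorial i : ℝ)) := by push_cast; ring
    have hGpos : 0 < Real.Gamma ((i:ℝ)+1+ν+1) := by
      apply Real.Gamma_pos_of_pos
      have : (0:ℝ) ≤ (i:ℝ) := Nat.cast_nonneg i
      linarith
    have hfpos : (0:ℝ) < (Nat.factorial (i+1) : ℝ) := by positivity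
    have hfpos2 : (0:ℝ) < (Nat.factorial i : ℝ) := by positivity
    have hfacpos : (0:ℝ) < (Nat.factorial (2*i+1) : ℝ) := by positivity
    have step1 : f (i+1) ≤ A^(ν+1) * A^(2*i+1) / (Real.Gamma (ν+2) * ((Nat.factorial (i+1) : ℝ) * (Nat.factorial i : ℝ))) := by
      rw [hf]
      simp only []
      rw [show ((i+1 : ℕ) : ℝ) = (i:ℝ)+1 by push_cast; ring, hsplit]
      apply div_le_div_of_nonneg_left (by positivity) (by positivity)
      · calc Real.Gamma (ν+2) * ((Nat.factorial (i+1) : ℝ) * (Nat.factorial i : ℝ))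
            ≤ (Nat.factorial (i+1) : ℝ) * Real.Gamma ((i:ℝ)+1+ν+1) := hden
          _ = (Nat.factorial (i+1) : ℝ) * Real.Gamma ((i:ℝ)+1+ν+1) := rfl
    have step2 : A^(ν+1) * A^(2*i+1) / (Real.Gamma (ν+2) * ((Nat.factorial (i+1) : ℝ) * (Nat.factorial i : ℝ)))
        ≤ A^(ν+1) / Real.Gamma (ν+2) * ((2*A)^(2*i+1) / (Nat.factorial (2*i+1) : ℝ)) := by
      rw [div_le_iff₀ (by positivity)]
      have expand : A^(ν+1) / Real.Gamma (ν+2) * ((2*A)^(2*i+1) / (Nat.factorial (2*i+1) : ℝ))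
            * (Real.Gamma (ν+2) * ((Nat.factorial (i+1) : ℝ) * (Nat.factorial i : ℝ)))
          = A^(ν+1) * A^(2*i+1) * (2^(2*i+1) * ((Nat.factorial (i+1) : ℝ) * (Nat.factorial i : ℝ)) / (Nat.factorial (2*i+1) : ℝ)) := by
        rw [mul_pow]
        field_simp
      rw [expand]
      have h2 : (1:ℝ) ≤ 2^(2*i+1) * ((Nat.factorial (i+1) : ℝ) * (Nat.factorial i : ℝ)) / (Nat.factorial (2*i+1) : ℝ) := by
        rw [le_div_iff₀ hfacpos, one_mul]
        have h4 : (4:ℝ)^(i+1) = 2 * 2^(2*i+1) := by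
          rw [show (4:ℝ) = 2^2 by norm_num, ← pow_mul]
          rw [show 2*(i+1) = (2*i+1)+1 by ring, pow_succ]
          ring
        nlinarith [hfac, hfacpos, mul_pos hfpos hfpos2]
      nlinarith [Real.rpow_nonneg hA0.le (ν+1), pow_nonneg hA0.le (2*i+1),
        mul_nonneg (Real.rpow_nonneg hA0.le (ν+1)) (pow_nonneg hA0.le (2*i+1))]
    exact step1.trans step2
  have partial_le : ∀ n : ℕ, ∑ k ∈ Finset.range n, f k
      ≤ A^ν / Real.Gamma (ν+1) + A^(ν+1) * Real.exp x / Real.Gamma (ν+2) := by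
    intro n
    match n with
    | 0 =>
      simp only [Finset.range_zero, Finset.sum_empty]
      have : 0 ≤ A^ν / Real.Gamma (ν+1) := by positivity
      have : 0 ≤ A^(ν+1) * Real.exp x / Real.Gamma (ν+2) := by positivity
      linarith
    | (m+1) =>
      rw [Finset.sum_range_succ']
      have hf0 : f 0 = A^ν / Real.Gamma (ν+1) := by
        rw [hf]
        norm_num
      have hsum : ∑ i ∈ Finset.range m, f (i+1)
          ≤ A^(ν+1) / Real.Gamma (ν+2) * ∑ i ∈ Finset.range m, ((2*A)^(2*i+1) / (Nat.factorial (2*i+1) : ℝ)) := by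
        rw [Finset.mul_sum]
        exact Finset.sum_le_sum (fun i _ => key i)
      have hexp : ∑ i ∈ Finset.range m, ((2*A)^(2*i+1) / (Nat.factorial (2*i+1) : ℝ)) ≤ Real.exp x := by
        have h := odd_sum_le_exp (2*A) (by positivity) m
        have e1 : Real.exp (2*A) = Real.exp x := by rw [hA]; ring_nf
        calc ∑ i ∈ Finset.range m, ((2*A)^(2*i+1) / (Nat.factorial (2*i+1) : ℝ))
            ≤ Real.exp (2*A) := h
          _ = Real.exp x := e1
      have : ∑ i ∈ Finset.range m, f (i+1) ≤ A^(ν+1) * Real.exp x / Real.Gamma (ν+2) := by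
        calc ∑ i ∈ Finset.range m, f (i+1)
            ≤ A^(ν+1) / Real.Gamma (ν+2) * ∑ i ∈ Finset.range m, ((2*A)^(2*i+1) / (Nat.factorial (2*i+1) : ℝ)) := hsum
          _ ≤ A^(ν+1) / Real.Gamma (ν+2) * Real.exp x := by
              apply mul_le_mul_of_nonneg_left hexp (by positivity)
          _ = A^(ν+1) * Real.exp x / Real.Gamma (ν+2) := by ring
      rw [hf0]
      linarith
  exact Real.tsum_le_of_sum_range_le hfnn partial_le

set_option maxHeartbeats 1000000 in
lemma besselHeat_le (ζ : ℝ) (hζ : -1/2 < ζ) : ∃ c : ℝ, 0 < c ∧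
    ∀ τ z s : ℝ, 0 < τ → 0 < z → z ≤ s/2 →
      besselHeat ζ τ z s ≤ c * τ^(-(ζ+1/2)) * ((1 + s^2/(8*τ)) * Real.exp (-(s^2/(16*τ)))) := by
  set ν : ℝ := ζ - 1/2 with hνdef
  have hν : -1 < ν := by rw [hνdef]; linarith
  have hG1 : 0 < Real.Gamma (ν+1) := Real.Gamma_pos_of_pos (by linarith)
  have hG2 : 0 < Real.Gamma (ν+2) := Real.Gamma_pos_of_pos (by linarith)
  refine ⟨(4:ℝ)^(-ν)/2 * (1/Real.Gamma (ν+1) + 1/Real.Gamma (ν+2)), by positivity, ?_⟩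
  intro τ z s hτ hz hzs
  have hs : 0 < s := by linarith
  have hzs0 : 0 < z * s := by positivity
  set x : ℝ := z * s / (2 * τ) with hxdef
  have hx0 : 0 < x := by positivity
  set A : ℝ := x / 2 with hAdef
  have hA0 : 0 < A := by positivity
  have hB := besselI_le ν x hν hx0
  -- notation
  set T1 : ℝ := (z * s) ^ ((1 : ℝ) / 2 - ζ) / (2 * τ) with hT1
  set T2 : ℝ := Real.exp (-(z ^ 2 + s ^ 2) / (4 * τ)) with hT2
  have hT1nn : 0 ≤ T1 := by positivity
  have hT2pos : 0 < T2 := Real.exp_pos _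
  have hBH : besselHeat ζ τ z s = T1 * T2 * besselI ν x := by
    rw [besselHeat, hνdef]
  have h1 : besselHeat ζ τ z s ≤ T1 * T2 * (A^ν / Real.Gamma (ν+1) + A^(ν+1) * Real.exp x / Real.Gamma (ν+2)) := by
    rw [hBH]
    exact mul_le_mul_of_nonneg_left hB (by positivity)
  -- key rpow identity
  have hA4 : A = z * s / (4 * τ) := by rw [hAdef, hxdef]; ring
  have hAν : (z*s) ^ ((1:ℝ)/2 - ζ) * A^ν = (4*τ)^(-ν) := by
    have h4τ : (0:ℝ) < 4*τ := by positivity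
    rw [hA4, Real.div_rpow hzs0.le h4τ.le,
      show (1:ℝ)/2 - ζ = -ν by rw [hνdef]; ring,
      Real.rpow_neg hzs0.le, Real.rpow_neg h4τ.le]
    field_simp
  have hsplit : A^(ν+1) = A^ν * A := Real.rpow_add_one hA0.ne' ν
  have hEq : T1 * T2 * (A^ν / Real.Gamma (ν+1) + A^(ν+1) * Real.exp x / Real.Gamma (ν+2))
      = (4*τ)^(-ν) / (2*τ) * (T2 * (1/Real.Gamma (ν+1) + A * Real.exp x / Real.Gamma (ν+2))) := by
    rw [hsplit, hT1, ← hAν]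
    field_simp
  -- bound the exp-bracket
  have hAu : A ≤ s^2/(8*τ) := by
    rw [hA4, div_le_div_iff₀ (by positivity) (by positivity)]
    nlinarith [mul_nonneg (mul_nonneg (by linarith : (0:ℝ) ≤ s - 2*z) hs.le) hτ.le]
  have hExpIneq : x + s^2/(16*τ) ≤ (z^2+s^2)/(4*τ) := by
    rw [← sub_nonneg]
    have hrw : (z^2+s^2)/(4*τ) - (x + s^2/(16*τ)) = (4*(z^2+s^2) - 8*(z*s) - s^2)/(16*τ) := by
      rw [hxdef]; field_simp; ring
    rw [hrw]
    apply div_nonneg _ (by positivity)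
    nlinarith [mul_nonneg (by linarith : (0:ℝ) ≤ s - 2*z) (by linarith : (0:ℝ) ≤ 3*s - 2*z)]
  have hE : T2 ≤ Real.exp (-x) * Real.exp (-(s^2/(16*τ))) := by
    rw [hT2, ← Real.exp_add]
    apply Real.exp_le_exp.2
    rw [neg_div]
    linarith
  have hbr : T2 * (1/Real.Gamma (ν+1) + A * Real.exp x / Real.Gamma (ν+2))
      ≤ (1/Real.Gamma (ν+1) + 1/Real.Gamma (ν+2)) * ((1 + s^2/(8*τ)) * Real.exp (-(s^2/(16*τ)))) := by
    have hbpos : 0 ≤ 1/Real.Gamma (ν+1) + A * Real.exp x / Real.Gamma (ν+2) := by positivity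
    have hex : Real.exp (-x) ≤ 1 := by
      have : Real.exp (-x) ≤ Real.exp 0 := Real.exp_le_exp.2 (by linarith)
      simpa using this
    calc T2 * (1/Real.Gamma (ν+1) + A * Real.exp x / Real.Gamma (ν+2))
        ≤ (Real.exp (-x) * Real.exp (-(s^2/(16*τ)))) * (1/Real.Gamma (ν+1) + A * Real.exp x / Real.Gamma (ν+2)) :=
          mul_le_mul_of_nonneg_right hE hbpos
      _ = Real.exp (-(s^2/(16*τ))) * (Real.exp (-x)/Real.Gamma (ν+1) + A * (Real.exp (-x) * Real.exp x)/Real.Gamma (ν+2)) := by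
          ring
      _ = Real.exp (-(s^2/(16*τ))) * (Real.exp (-x)/Real.Gamma (ν+1) + A/Real.Gamma (ν+2)) := by
          rw [← Real.exp_add]; simp
      _ ≤ Real.exp (-(s^2/(16*τ))) * (1/Real.Gamma (ν+1) + (s^2/(8*τ))/Real.Gamma (ν+2)) := by
          apply mul_le_mul_of_nonneg_left _ (Real.exp_nonneg _)
          gcongr
      _ ≤ Real.exp (-(s^2/(16*τ))) * ((1/Real.Gamma (ν+1) + 1/Real.Gamma (ν+2)) * (1 + s^2/(8*τ))) := by
          apply mul_le_mul_of_nonneg_left _ (Real.exp_nonneg _)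
          have h1' : 0 < 1/Real.Gamma (ν+1) := by positivity
          have h2' : 0 < 1/Real.Gamma (ν+2) := by positivity
          have hu : 0 ≤ s^2/(8*τ) := by positivity
          rw [div_eq_mul_one_div (s^2/(8*τ))]
          nlinarith
      _ = (1/Real.Gamma (ν+1) + 1/Real.Gamma (ν+2)) * ((1 + s^2/(8*τ)) * Real.exp (-(s^2/(16*τ)))) := by
          ring
  have hP : (4*τ)^(-ν)/(2*τ) = (4:ℝ)^(-ν)/2 * τ^(-(ζ+1/2)) := by
    rw [Real.mul_rpow (by norm_num) hτ.le, show -(ζ+1/2) = -ν + (-1) by rw [hνdef]; ring,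
      Real.rpow_add hτ, Real.rpow_neg_one]
    field_simp
  calc besselHeat ζ τ z s
      ≤ T1 * T2 * (A^ν / Real.Gamma (ν+1) + A^(ν+1) * Real.exp x / Real.Gamma (ν+2)) := h1
    _ = (4*τ)^(-ν) / (2*τ) * (T2 * (1/Real.Gamma (ν+1) + A * Real.exp x / Real.Gamma (ν+2))) := hEq
    _ ≤ (4*τ)^(-ν) / (2*τ) * ((1/Real.Gamma (ν+1) + 1/Real.Gamma (ν+2)) * ((1 + s^2/(8*τ)) * Real.exp (-(s^2/(16*τ))))) := by
        apply mul_le_mul_of_nonneg_left hbr (by positivity)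
    _ = (4:ℝ)^(-ν)/2 * (1/Real.Gamma (ν+1) + 1/Real.Gamma (ν+2)) * τ^(-(ζ+1/2)) * ((1 + s^2/(8*τ)) * Real.exp (-(s^2/(16*τ)))) := by
        rw [hP]; ring

lemma poly_exp_le (y : ℝ) (hy : 0 ≤ y) : (1 + 2*y) * Real.exp (-y) ≤ 3 * Real.exp (-(y/2)) := by
  have key : 1 + 2*y ≤ 3 * Real.exp (y/2) := by
    have h := Real.add_one_le_exp (y/4)
    have e : Real.exp (y/2) = Real.exp (y/4) * Real.exp (y/4) := by
      rw [← Real.exp_add]; ring_nf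
    nlinarith [Real.exp_pos (y/4), sq_nonneg (3*y-4)]
  calc (1 + 2*y) * Real.exp (-y) ≤ (3 * Real.exp (y/2)) * Real.exp (-y) :=
        mul_le_mul_of_nonneg_right key (Real.exp_nonneg _)
    _ = 3 * Real.exp (-(y/2)) := by rw [mul_assoc, ← Real.exp_add]; ring_nf

lemma exp_rpow_le (β y : ℝ) (hβ : 0 < β) (hy : 0 < y) :
    Real.exp (-(y/2)) ≤ (2*β)^β * y^(-β) := by
  have h2β : (0:ℝ) < 2*β := by linarith
  have hlog : Real.log (y/(2*β)) ≤ y/(2*β) - 1 := Real.log_le_sub_one_of_pos (by positivity)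
  have hlog2 : Real.log (y/(2*β)) = Real.log y - Real.log (2*β) := Real.log_div hy.ne' h2β.ne'
  have key : β * Real.log y - β * Real.log (2*β) ≤ y/2 := by
    have := mul_le_mul_of_nonneg_left hlog hβ.le
    rw [hlog2] at this
    have h2 : β * (y/(2*β) - 1) = y/2 - β := by field_simp
    rw [h2] at this
    linarith
  have hrw : (2*β)^β * y^(-β) = Real.exp (Real.log (2*β) * β + Real.log y * (-β)) := by
    rw [Real.exp_add, Real.rpow_def_of_pos h2β, Real.rpow_def_of_pos hy]
  rw [hrw]
  apply Real.exp_le_exp.2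
  nlinarith [key]

lemma min_le_two_one_sub_exp (x : ℝ) (hx : 0 ≤ x) : min 1 x ≤ 2*(1 - Real.exp (-x)) := by
  rcases le_total 1 x with h | h
  · rw [min_eq_left h]
    have h1 : Real.exp (-x) ≤ Real.exp (-1) := Real.exp_le_exp.2 (by linarith)
    have h2 : Real.exp (-1) ≤ 1/2 := by
      rw [Real.exp_neg]
      have : (2:ℝ) ≤ Real.exp 1 := by nlinarith [Real.add_one_le_exp 1]
      rw [inv_le_comm₀ (Real.exp_pos 1) (by norm_num)] at *
      · linarith [this]
    linarith
  · rw [min_eq_right h]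
    have h1 : x + 1 ≤ Real.exp x := Real.add_one_le_exp x
    have h3 : (2-x)*(x+1) ≤ (2-x)*Real.exp x := mul_le_mul_of_nonneg_left h1 (by linarith)
    have h5 : 2 ≤ (2-x)*Real.exp x := by nlinarith
    have h6 := mul_le_mul_of_nonneg_right h5 (inv_nonneg.2 (Real.exp_pos x).le)
    rw [mul_assoc, mul_inv_cancel₀ (Real.exp_ne_zero x), mul_one] at h6
    rw [Real.exp_neg]
    linarith

lemma besselHeat_bounds (ζ : ℝ) (hζ : -1/2 < ζ) : ∃ c : ℝ, 0 < c ∧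
    ∀ τ z s : ℝ, 0 < τ → 0 < z → z ≤ s/2 →
      besselHeat ζ τ z s ≤ c * τ^(-(ζ+1/2)) ∧
      besselHeat ζ τ z s ≤ c * s^(-(2*ζ+1)) * min 1 (τ/s^2) := by
  obtain ⟨c₀, hc₀, hB⟩ := besselHeat_le ζ hζ
  set β₁ : ℝ := ζ + 1/2 with hβ₁
  set β₂ : ℝ := ζ + 3/2 with hβ₂
  have hβ₁0 : 0 < β₁ := by rw [hβ₁]; linarith
  have hβ₂0 : 0 < β₂ := by rw [hβ₂]; linarith
  set K : ℝ := 3*c₀ * ((2*β₁)^β₁ * 16^β₁ + (2*β₂)^β₂ * 16^β₂ + 1) with hK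
  have hKpos : 0 < K := by positivity
  refine ⟨K, hKpos, ?_⟩
  intro τ z s hτ hz hzs
  have hs : 0 < s := by linarith
  set y : ℝ := s^2/(16*τ) with hy
  have hy0 : 0 < y := by positivity
  have step : besselHeat ζ τ z s ≤ 3*c₀ * τ^(-(ζ+1/2)) * Real.exp (-(y/2)) := by
    have h1 := hB τ z s hτ hz hzs
    have h2 : (1 + s^2/(8*τ)) * Real.exp (-(s^2/(16*τ))) ≤ 3 * Real.exp (-(y/2)) := by
      have e1 : s^2/(8*τ) = 2*y := by rw [hy]; ring
      rw [e1, ← hy]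
      exact poly_exp_le y hy0.le
    calc besselHeat ζ τ z s ≤ c₀ * τ^(-(ζ+1/2)) * ((1 + s^2/(8*τ)) * Real.exp (-(s^2/(16*τ)))) := h1
      _ ≤ c₀ * τ^(-(ζ+1/2)) * (3 * Real.exp (-(y/2))) := by
          apply mul_le_mul_of_nonneg_left h2 (by positivity)
      _ = 3*c₀ * τ^(-(ζ+1/2)) * Real.exp (-(y/2)) := by ring
  -- generic power consequence
  have hs2 : (0:ℝ) < s^2 := by positivity
  have h16τ : (0:ℝ) < 16*τ := by positivity
  have hpow : ∀ β : ℝ, 0 < β → besselHeat ζ τ z s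
      ≤ 3*c₀ * ((2*β)^β * 16^β) * (τ^(-(ζ+1/2)) * τ^β * s^(-(2*β))) := by
    intro β hβ
    have h3 := exp_rpow_le β y hβ hy0
    have e2 : ((s^2:ℝ))^(-β) = s^(-(2*β)) := by
      rw [← Real.rpow_natCast s 2, ← Real.rpow_mul hs.le]
      norm_num
    have hyβ : y^(-β) = 16^β * (τ^β * s^(-(2*β))) := by
      have e1 : y^(-β) = (16*τ/s^2)^β := by
        rw [Real.rpow_neg hy0.le, ← Real.inv_rpow hy0.le, hy, inv_div]
      rw [e1, Real.div_rpow h16τ.le hs2.le, Real.mul_rpow (by norm_num) hτ.le,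
        div_eq_mul_inv, ← Real.rpow_neg hs2.le, e2, mul_assoc]
    calc besselHeat ζ τ z s ≤ 3*c₀ * τ^(-(ζ+1/2)) * Real.exp (-(y/2)) := step
      _ ≤ 3*c₀ * τ^(-(ζ+1/2)) * ((2*β)^β * y^(-β)) := by
          apply mul_le_mul_of_nonneg_left h3 (by positivity)
      _ = 3*c₀ * ((2*β)^β * 16^β) * (τ^(-(ζ+1/2)) * τ^β * s^(-(2*β))) := by
          rw [hyβ]; ring
  have bound0 : besselHeat ζ τ z s ≤ K * τ^(-(ζ+1/2)) := by
    have hexp1 : Real.exp (-(y/2)) ≤ 1 := by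
      have : Real.exp (-(y/2)) ≤ Real.exp 0 := Real.exp_le_exp.2 (by linarith)
      simpa using this
    have h4 : besselHeat ζ τ z s ≤ 3*c₀ * τ^(-(ζ+1/2)) := by
      calc besselHeat ζ τ z s ≤ 3*c₀ * τ^(-(ζ+1/2)) * Real.exp (-(y/2)) := step
        _ ≤ 3*c₀ * τ^(-(ζ+1/2)) * 1 := by
            apply mul_le_mul_of_nonneg_left hexp1 (by positivity)
        _ = 3*c₀ * τ^(-(ζ+1/2)) := by ring
    have hK3 : 3*c₀ ≤ K := by
      rw [hK]
      have h1' : (0:ℝ) ≤ (2*β₁)^β₁ * 16^β₁ := by positivity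
      have h2' : (0:ℝ) ≤ (2*β₂)^β₂ * 16^β₂ := by positivity
      nlinarith
    calc besselHeat ζ τ z s ≤ 3*c₀ * τ^(-(ζ+1/2)) := h4
      _ ≤ K * τ^(-(ζ+1/2)) := by
          apply mul_le_mul_of_nonneg_right hK3 (by positivity)
  have bound1 : besselHeat ζ τ z s ≤ 3*c₀ * ((2*β₁)^β₁ * 16^β₁) * s^(-(2*ζ+1)) := by
    have h := hpow β₁ hβ₁0
    have e3 : τ^(-(ζ+1/2)) * τ^β₁ = 1 := by
      rw [← Real.rpow_add hτ, show -(ζ+1/2) + β₁ = 0 by rw [hβ₁]; ring, Real.rpow_zero]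
    have e4 : s^(-(2*β₁)) = s^(-(2*ζ+1)) := by
      congr 1; rw [hβ₁]; ring
    rw [e3, e4, one_mul] at h
    exact h
  have bound2 : besselHeat ζ τ z s ≤ 3*c₀ * ((2*β₂)^β₂ * 16^β₂) * (s^(-(2*ζ+1)) * (τ/s^2)) := by
    have h := hpow β₂ hβ₂0
    have e3 : τ^(-(ζ+1/2)) * τ^β₂ = τ := by
      rw [← Real.rpow_add hτ, show -(ζ+1/2) + β₂ = 1 by rw [hβ₂]; ring, Real.rpow_one]
    have e5 : s^((-2:ℝ)) = (s^2)⁻¹ := by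
      rw [show ((-2):ℝ) = -((2:ℕ):ℝ) by norm_num, Real.rpow_neg hs.le, Real.rpow_natCast]
    have e4 : s^(-(2*β₂)) = s^(-(2*ζ+1)) * (s^2)⁻¹ := by
      rw [← e5, ← Real.rpow_add hs]
      congr 1; rw [hβ₂]; ring
    rw [e3, e4] at h
    calc besselHeat ζ τ z s ≤ 3*c₀ * ((2*β₂)^β₂ * 16^β₂) * (τ * (s^(-(2*ζ+1)) * (s^2)⁻¹)) := h
      _ = 3*c₀ * ((2*β₂)^β₂ * 16^β₂) * (s^(-(2*ζ+1)) * (τ/s^2)) := by ring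
  refine ⟨bound0, ?_⟩
  have hsp : (0:ℝ) ≤ s^(-(2*ζ+1)) := Real.rpow_nonneg hs.le _
  have hM1 : 3*c₀ * ((2*β₁)^β₁ * 16^β₁) ≤ K := by
    rw [hK]
    have h2' : (0:ℝ) ≤ (2*β₂)^β₂ * 16^β₂ := by positivity
    nlinarith
  have hM2 : 3*c₀ * ((2*β₂)^β₂ * 16^β₂) ≤ K := by
    rw [hK]
    have h1' : (0:ℝ) ≤ (2*β₁)^β₁ * 16^β₁ := by positivity
    nlinarith
  rcases le_total (τ/s^2) 1 with hcase | hcase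
  · rw [min_eq_right hcase]
    calc besselHeat ζ τ z s ≤ 3*c₀ * ((2*β₂)^β₂ * 16^β₂) * (s^(-(2*ζ+1)) * (τ/s^2)) := bound2
      _ ≤ K * (s^(-(2*ζ+1)) * (τ/s^2)) := by
          apply mul_le_mul_of_nonneg_right hM2 (by positivity)
      _ = K * s^(-(2*ζ+1)) * (τ/s^2) := by ring
  · rw [min_eq_left hcase]
    calc besselHeat ζ τ z s ≤ 3*c₀ * ((2*β₁)^β₁ * 16^β₁) * s^(-(2*ζ+1)) := bound1
      _ ≤ K * s^(-(2*ζ+1)) := mul_le_mul_of_nonneg_right hM1 hsp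
      _ = K * s^(-(2*ζ+1)) * 1 := by ring

lemma aux_int (a r : ℝ) (ha : 0 < a) (hr : 0 < r) :
    IntegrableOn (fun x : ℝ => x^(a-1) * Real.exp (-(r*x))) (Ioi 0) := by
  have h0 := Real.GammaIntegral_convergent ha
  have h1 : IntegrableOn (fun x : ℝ => Real.exp (-(r*x)) * (r*x)^(a-1)) (Ioi 0) := by
    have := (integrableOn_Ioi_comp_mul_left_iff (fun x : ℝ => Real.exp (-x) * x^(a-1)) 0 hr).2
      (by simpa using h0)
    simpa using this
  have h2 : IntegrableOn (fun x : ℝ => (r^(a-1))⁻¹ * (Real.exp (-(r*x)) * (r*x)^(a-1))) (Ioi 0) :=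
    h1.const_mul ((r^(a-1))⁻¹)
  apply h2.congr_fun ?_ measurableSet_Ioi
  intro x hx
  have hx0 : (0:ℝ) < x := hx
  have hrx : (r*x)^(a-1) = r^(a-1) * x^(a-1) := Real.mul_rpow hr.le hx0.le
  have hra : (0:ℝ) < r^(a-1) := Real.rpow_pos_of_pos hr _
  field_simp [hrx]
  ring_nf; exact Real.mul_rpow hr.le hx0.le

lemma J_int (α β t : ℝ) (hα0 : 0 < α) (hβ : 0 < β) (ht : 0 < t) :
    IntegrableOn (fun l : ℝ => l^(β-1) * Real.exp (-t * l^(α/2))) (Ioi 0) := by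
  have hp : (α/2) ≠ 0 := by positivity
  have hf : IntegrableOn (fun u : ℝ => u^(2*β/α - 1) * Real.exp (-(t*u))) (Ioi 0) :=
    aux_int (2*β/α) t (by positivity) ht
  have hthis : IntegrableOn (fun x : ℝ => x^(α/2-1) • ((fun u : ℝ => u^(2*β/α - 1) * Real.exp (-(t*u))) (x^(α/2)))) (Ioi 0) := (integrableOn_Ioi_comp_rpow_iff' (fun u : ℝ => u^(2*β/α - 1) * Real.exp (-(t*u))) hp).2 hf
  apply hthis.congr_fun ?_ measurableSet_Ioi
  intro x hx
  have hx0 : (0:ℝ) < x := hx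
  have e1 : (x^(α/2))^(2*β/α - 1) = x^(β - α/2) := by
    rw [← Real.rpow_mul hx0.le]
    congr 1
    field_simp
  simp only [smul_eq_mul]
  rw [e1, ← mul_assoc, ← Real.rpow_add hx0]
  ring_nf

set_option maxHeartbeats 1000000 in
lemma moment (α : ℝ) (σ : ℝ → ℝ → ℝ) (hα0 : 0 < α)
    (hσ1 : ∀ t, 0 < t → ∀ τ, 0 < τ → 0 ≤ σ t τ)
    (hσ2 : ∀ t, 0 < t → Measurable (σ t))
    (hσ3 : ∀ t l : ℝ, 0 < t → 0 ≤ l →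
      (∫ τ in Ioi (0 : ℝ), Real.exp (-τ * l) * σ t τ) = Real.exp (-t * l ^ (α / 2)))
    (t β : ℝ) (ht : 0 < t) (hβ : 0 < β) :
    Integrable (fun τ => τ^(-β) * σ t τ) (volume.restrict (Ioi 0)) ∧
    ∫ τ in Ioi (0:ℝ), τ^(-β) * σ t τ
      ≤ (Real.Gamma β)⁻¹ * (t^(-(2*β/α)) * (2/α) * Real.Gamma (2*β/α)) := by
  have hmeas := hσ2 t ht
  have hnn : ∀ᵐ τ ∂(volume.restrict (Ioi (0:ℝ))), 0 ≤ σ t τ :=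
    (ae_restrict_iff' measurableSet_Ioi).2 (ae_of_all _ fun τ hτ => hσ1 t ht τ hτ)
  have hIntExp : ∀ l : ℝ, 0 ≤ l →
      Integrable (fun τ => Real.exp (-τ*l) * σ t τ) (volume.restrict (Ioi 0)) := by
    intro l hl
    by_contra h
    have h2 := hσ3 t l ht hl
    rw [integral_undef h] at h2
    exact (Real.exp_pos _).ne' h2.symm
  have hnn2 : ∀ l : ℝ, ∀ᵐ τ ∂(volume.restrict (Ioi (0:ℝ))), 0 ≤ Real.exp (-τ*l) * σ t τ :=
    fun l => hnn.mono fun τ h => mul_nonneg (Real.exp_nonneg _) h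
  have hlint : ∀ l : ℝ, 0 ≤ l →
      ∫⁻ τ in Ioi (0:ℝ), ENNReal.ofReal (Real.exp (-τ*l) * σ t τ)
        = ENNReal.ofReal (Real.exp (-t * l^(α/2))) := by
    intro l hl
    rw [← MeasureTheory.ofReal_integral_eq_lintegral_ofReal (hIntExp l hl) (hnn2 l), hσ3 t l ht hl]
  set μ := volume.restrict (Ioi (0:ℝ)) with hμ
  set G : ℝ → ℝ → ℝ≥0∞ := fun l τ => ENNReal.ofReal (l^(β-1) * (Real.exp (-τ*l) * σ t τ)) with hG
  have hGmeas : Measurable (Function.uncurry G) := by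
    apply Measurable.ennreal_ofReal
    fun_prop
  have hposae : ∀ᵐ τ ∂μ, τ ∈ Ioi (0:ℝ) := by
    rw [hμ]; exact ae_restrict_mem measurableSet_Ioi
  set J : ℝ := ∫ l in Ioi (0:ℝ), l^(β-1) * Real.exp (-t * l^(α/2)) with hJ
  have hJint := J_int α β t hα0 hβ ht
  have hJnn : 0 ≤ᵐ[μ] fun l : ℝ => l^(β-1) * Real.exp (-t * l^(α/2)) := by
    filter_upwards [hposae] with l hl
    exact mul_nonneg (Real.rpow_nonneg (le_of_lt hl) _) (Real.exp_nonneg _)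
  have side1 : ∫⁻ l, (∫⁻ τ, G l τ ∂μ) ∂μ = ENNReal.ofReal J := by
    have step : ∫⁻ l, (∫⁻ τ, G l τ ∂μ) ∂μ
        = ∫⁻ l, ENNReal.ofReal (l^(β-1) * Real.exp (-t * l^(α/2))) ∂μ := by
      apply lintegral_congr_ae
      filter_upwards [hposae] with l hl
      have hl0 : (0:ℝ) < l := hl
      have e1 : ∀ τ:ℝ, G l τ = ENNReal.ofReal (l^(β-1)) * ENNReal.ofReal (Real.exp (-τ*l) * σ t τ) := by
        intro τ; rw [hG]; exact ENNReal.ofReal_mul (Real.rpow_nonneg hl0.le _)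
      calc ∫⁻ τ, G l τ ∂μ
          = ∫⁻ τ, ENNReal.ofReal (l^(β-1)) * ENNReal.ofReal (Real.exp (-τ*l) * σ t τ) ∂μ := by
            exact lintegral_congr fun τ => e1 τ
        _ = ENNReal.ofReal (l^(β-1)) * ∫⁻ τ, ENNReal.ofReal (Real.exp (-τ*l) * σ t τ) ∂μ := by
            apply lintegral_const_mul''
            exact (Measurable.ennreal_ofReal (by fun_prop)).aemeasurable
        _ = ENNReal.ofReal (l^(β-1)) * ENNReal.ofReal (Real.exp (-t * l^(α/2))) := by
            rw [hlint l hl0.le]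
        _ = ENNReal.ofReal (l^(β-1) * Real.exp (-t * l^(α/2))) := by
            rw [← ENNReal.ofReal_mul (Real.rpow_nonneg hl0.le _)]
    rw [step, ← MeasureTheory.ofReal_integral_eq_lintegral_ofReal hJint hJnn]
  have hfmeas : Measurable (fun τ : ℝ => τ^(-β) * σ t τ) := by fun_prop
  have side2 : ∫⁻ τ, (∫⁻ l, G l τ ∂μ) ∂μ
      = ENNReal.ofReal (Real.Gamma β) * ∫⁻ τ, ENNReal.ofReal (τ^(-β) * σ t τ) ∂μ := by
    rw [← lintegral_const_mul'' _ (Measurable.ennreal_ofReal hfmeas).aemeasurable]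
    apply lintegral_congr_ae
    filter_upwards [hposae] with τ hτ
    have hτ0 : (0:ℝ) < τ := hτ
    have hσnn := hσ1 t ht τ hτ0
    have e2 : ∀ l:ℝ, G l τ = ENNReal.ofReal (l^(β-1) * Real.exp (-τ*l)) * ENNReal.ofReal (σ t τ) := by
      intro l
      have e0 : G l τ = ENNReal.ofReal ((l^(β-1) * Real.exp (-τ*l)) * σ t τ) := by
        rw [hG]; simp only []; rw [← mul_assoc]
      rw [e0]
      exact ENNReal.ofReal_mul' hσnn
    have hIOn : IntegrableOn (fun l : ℝ => l^(β-1) * Real.exp (-τ*l)) (Ioi 0) := by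
      have := aux_int β τ hβ hτ0
      apply this.congr_fun ?_ measurableSet_Ioi
      intro l _
      simp only [neg_mul]
    have hnnl : 0 ≤ᵐ[μ] fun l : ℝ => l^(β-1) * Real.exp (-τ*l) := by
      filter_upwards [hposae] with l hl
      exact mul_nonneg (Real.rpow_nonneg (le_of_lt hl) _) (Real.exp_nonneg _)
    have hval : ∫ l in Ioi (0:ℝ), l^(β-1) * Real.exp (-τ*l) = (1/τ)^β * Real.Gamma β := by
      rw [← integral_rpow_mul_exp_neg_mul_Ioi hβ hτ0]
      apply setIntegral_congr_fun measurableSet_Ioi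
      intro l _
      simp only [neg_mul]
    have hpowβ : ((1:ℝ)/τ)^β = τ^(-β) := by
      rw [one_div, Real.inv_rpow hτ0.le, ← Real.rpow_neg hτ0.le]
    calc ∫⁻ l, G l τ ∂μ
        = ∫⁻ l, ENNReal.ofReal (l^(β-1) * Real.exp (-τ*l)) * ENNReal.ofReal (σ t τ) ∂μ :=
          lintegral_congr fun l => e2 l
      _ = (∫⁻ l, ENNReal.ofReal (l^(β-1) * Real.exp (-τ*l)) ∂μ) * ENNReal.ofReal (σ t τ) := by
          apply lintegral_mul_const''
          exact (Measurable.ennreal_ofReal (by fun_prop)).aemeasurable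
      _ = ENNReal.ofReal ((1/τ)^β * Real.Gamma β) * ENNReal.ofReal (σ t τ) := by
          rw [← MeasureTheory.ofReal_integral_eq_lintegral_ofReal hIOn hnnl, ← hμ, hval]
      _ = ENNReal.ofReal (Real.Gamma β) * ENNReal.ofReal (τ^(-β) * σ t τ) := by
          rw [← ENNReal.ofReal_mul (by positivity), ← ENNReal.ofReal_mul (Real.Gamma_nonneg_of_nonneg hβ.le)]
          congr 1
          rw [hpowβ]; ring
  have hswap : ∫⁻ l, (∫⁻ τ, G l τ ∂μ) ∂μ = ∫⁻ τ, (∫⁻ l, G l τ ∂μ) ∂μ :=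
    lintegral_lintegral_swap hGmeas.aemeasurable
  have hcomb : ENNReal.ofReal (Real.Gamma β) * ∫⁻ τ, ENNReal.ofReal (τ^(-β) * σ t τ) ∂μ
      = ENNReal.ofReal J := by
    rw [← side2, ← hswap, side1]
  have hΓpos : 0 < Real.Gamma β := Real.Gamma_pos_of_pos hβ
  have hΓ0 : (ENNReal.ofReal (Real.Gamma β)) ≠ 0 := ne_of_gt (ENNReal.ofReal_pos.2 hΓpos)
  have hΓtop : (ENNReal.ofReal (Real.Gamma β)) ≠ ⊤ := ENNReal.ofReal_ne_top
  have hL : ∫⁻ τ, ENNReal.ofReal (τ^(-β) * σ t τ) ∂μ = ENNReal.ofReal (J / Real.Gamma β) := by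
    rw [ENNReal.ofReal_div_of_pos hΓpos]
    exact (ENNReal.eq_div_iff hΓ0 hΓtop).2 hcomb
  have hfnn : 0 ≤ᵐ[μ] fun τ : ℝ => τ^(-β) * σ t τ := by
    filter_upwards [hnn, hposae] with τ h1 h2
    exact mul_nonneg (Real.rpow_nonneg (le_of_lt h2) _) h1
  have hInt : Integrable (fun τ : ℝ => τ^(-β) * σ t τ) μ := by
    refine ⟨hfmeas.aestronglyMeasurable, ?_⟩
    rw [hasFiniteIntegral_iff_ofReal hfnn, hL]
    exact ENNReal.ofReal_lt_top
  refine ⟨hInt, ?_⟩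
  have hJval : J = t^(-(2*β/α)) * (2/α) * Real.Gamma (2*β/α) := by
    have hval := integral_rpow_mul_exp_neg_mul_rpow (p := α/2) (q := β-1) (b := t)
      (by positivity) (by linarith) ht
    rw [hJ]
    calc (∫ l in Ioi (0:ℝ), l^(β-1) * Real.exp (-t * l^(α/2)))
        = t ^ (-(β - 1 + 1) / (α/2)) * (1 / (α/2)) * Real.Gamma ((β - 1 + 1) / (α/2)) := hval
      _ = t^(-(2*β/α)) * (2/α) * Real.Gamma (2*β/α) := by
          rw [show -(β-1+1)/(α/2) = -(2*β/α) by rw [show β-1+1 = β by ring, neg_div, div_div_eq_mul_div]; ring_nf,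
            show (β-1+1)/(α/2) = 2*β/α by rw [show β-1+1 = β by ring, div_div_eq_mul_div]; ring_nf,
            show (1:ℝ)/(α/2) = 2/α by rw [one_div_div]]
  have hJnonneg : 0 ≤ J := by
    rw [hJval]
    have := Real.Gamma_nonneg_of_nonneg (by positivity : (0:ℝ) ≤ 2*β/α)
    positivity
  have : ∫ τ in Ioi (0:ℝ), τ^(-β) * σ t τ = J / Real.Gamma β := by
    rw [MeasureTheory.integral_eq_lintegral_of_nonneg_ae hfnn hfmeas.aestronglyMeasurable, hL,
      ENNReal.toReal_ofReal (by positivity)]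
  rw [this, hJval, div_eq_inv_mul]

set_option maxHeartbeats 1000000 in
theorem stmt16 (ζ α : ℝ) (hζ : -1/2 < ζ) (hα0 : 0 < α) (hα2 : α < 2)
    (σ : ℝ → ℝ → ℝ) (hσ : IsStableSubordinatorDensity α σ) :
    ∃ C : ℝ, 0 < C ∧
      ∀ τ z s : ℝ, 0 < τ → 0 < z → z ≤ s / 2 →
        subKernel ζ σ τ z s
            ≤ C * τ / (s ^ (2 * ζ + 1 + α) + τ ^ ((2 * ζ + 1 + α) / α)) ∧
          subKernel ζ σ τ z s ≤ C * s ^ (-(2 * ζ + 1)) := by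
  obtain ⟨hσ1, hσ2, hσ3⟩ := hσ
  obtain ⟨K, hK, hbnd⟩ := besselHeat_bounds ζ hζ
  set β₁ : ℝ := ζ + 1/2 with hβ₁
  have hβ₁0 : 0 < β₁ := by rw [hβ₁]; linarith
  have hΓβ₁ : 0 < Real.Gamma β₁ := Real.Gamma_pos_of_pos hβ₁0
  have hΓ2 : 0 < Real.Gamma (2*β₁/α) := Real.Gamma_pos_of_pos (by positivity)
  set M₂ : ℝ := K * ((Real.Gamma β₁)⁻¹ * ((2/α) * Real.Gamma (2*β₁/α))) with hM₂
  have hM₂0 : 0 < M₂ := by positivity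
  refine ⟨2*K + M₂ + 1, by positivity, ?_⟩
  intro t z s ht hz hzs
  have hs : 0 < s := by linarith
  have hposae : ∀ᵐ τ ∂(volume.restrict (Ioi (0:ℝ))), τ ∈ Ioi (0:ℝ) :=
    ae_restrict_mem measurableSet_Ioi
  have hnnσ : ∀ᵐ τ ∂(volume.restrict (Ioi (0:ℝ))), 0 ≤ σ t τ :=
    (ae_restrict_iff' measurableSet_Ioi).2 (ae_of_all _ fun τ hτ => hσ1 t ht τ hτ)
  have hIntExp : ∀ l : ℝ, 0 ≤ l →
      Integrable (fun τ => Real.exp (-τ*l) * σ t τ) (volume.restrict (Ioi 0)) := by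
    intro l hl
    by_contra h
    have h2 := hσ3 t l ht hl
    rw [integral_undef h] at h2
    exact (Real.exp_pos _).ne' h2.symm
  have hIntσ : Integrable (σ t) (volume.restrict (Ioi 0)) :=
    (hIntExp 0 le_rfl).congr (ae_of_all _ fun τ => by simp)
  have hSumσ : ∫ τ in Ioi (0:ℝ), σ t τ = 1 := by
    have h2 := hσ3 t 0 ht le_rfl
    rw [Real.zero_rpow (by positivity : α/2 ≠ 0), mul_zero, Real.exp_zero] at h2
    rw [← h2]
    apply integral_congr_ae (ae_of_all _ fun τ => by simp)
  -- nonnegativity of the integrand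
  have hfnn : 0 ≤ᵐ[volume.restrict (Ioi (0:ℝ))] fun τ => besselHeat ζ τ z s * σ t τ := by
    filter_upwards [hposae, hnnσ] with τ hτ h1
    have hτ0 : (0:ℝ) < τ := hτ
    have hBnn : 0 ≤ besselHeat ζ τ z s := by
      have h3 : 0 ≤ besselI (ζ - 1/2) (z*s/(2*τ)) :=
        besselI_nonneg _ _ (by positivity) (by linarith)
      rw [besselHeat]
      have h4 : (0:ℝ) ≤ (z*s)^((1:ℝ)/2 - ζ) / (2*τ) := by positivity
      exact mul_nonneg (mul_nonneg h4 (Real.exp_nonneg _)) h3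
    exact mul_nonneg hBnn h1
  -- Bound A : subKernel ≤ 2K s^{-(2ζ+1)} (1 - exp (-t s^{-α}))
  have hlam : (0:ℝ) ≤ 1/s^2 := by positivity
  have hgInt : Integrable
      (fun τ : ℝ => 2*K*s^(-(2*ζ+1)) * (σ t τ - Real.exp (-τ*(1/s^2)) * σ t τ))
      (volume.restrict (Ioi 0)) := (hIntσ.sub (hIntExp (1/s^2) hlam)).const_mul _
  have hfg : (fun τ => besselHeat ζ τ z s * σ t τ)
      ≤ᵐ[volume.restrict (Ioi (0:ℝ))]
      fun τ : ℝ => 2*K*s^(-(2*ζ+1)) * (σ t τ - Real.exp (-τ*(1/s^2)) * σ t τ) := by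
    filter_upwards [hposae, hnnσ] with τ hτ h1
    have hτ0 : (0:ℝ) < τ := hτ
    have hb := (hbnd τ z s hτ0 hz hzs).2
    have hmin := min_le_two_one_sub_exp (τ/s^2) (by positivity)
    have hKs : (0:ℝ) ≤ K * s^(-(2*ζ+1)) := by positivity
    have e1 : Real.exp (-(τ/s^2)) = Real.exp (-τ*(1/s^2)) := by
      congr 1; ring
    calc besselHeat ζ τ z s * σ t τ
        ≤ (K * s^(-(2*ζ+1)) * min 1 (τ/s^2)) * σ t τ := mul_le_mul_of_nonneg_right hb h1
      _ ≤ (K * s^(-(2*ζ+1)) * (2*(1 - Real.exp (-(τ/s^2))))) * σ t τ := by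
          apply mul_le_mul_of_nonneg_right _ h1
          exact mul_le_mul_of_nonneg_left hmin hKs
      _ = 2*K*s^(-(2*ζ+1)) * (σ t τ - Real.exp (-τ*(1/s^2)) * σ t τ) := by
          rw [← e1]; ring
  have hgVal : ∫ τ in Ioi (0:ℝ), 2*K*s^(-(2*ζ+1)) * (σ t τ - Real.exp (-τ*(1/s^2)) * σ t τ)
      = 2*K*s^(-(2*ζ+1)) * (1 - Real.exp (-t * ((1/s^2))^(α/2))) := by
    rw [integral_const_mul, integral_sub hIntσ (hIntExp (1/s^2) hlam), hSumσ, hσ3 t (1/s^2) ht hlam]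
  have boundA : subKernel ζ σ t z s
      ≤ 2*K*s^(-(2*ζ+1)) * (1 - Real.exp (-t * ((1/s^2))^(α/2))) := by
    rw [subKernel, ← hgVal]
    exact integral_mono_of_nonneg hfnn hgInt hfg
  have hsα : ((1:ℝ)/s^2)^(α/2) = s^(-α) := by
    rw [one_div, ← Real.rpow_natCast s 2, ← Real.rpow_neg hs.le, ← Real.rpow_mul hs.le]
    congr 1
    ring
  -- second claim
  have hexp01 : 1 - Real.exp (-t * ((1/s^2))^(α/2)) ≤ 1 := by
    have := Real.exp_nonneg (-t * ((1/s^2))^(α/2)); linarith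
  have claim2 : subKernel ζ σ t z s ≤ (2*K + M₂ + 1) * s^(-(2*ζ+1)) := by
    have h5 : subKernel ζ σ t z s ≤ 2*K*s^(-(2*ζ+1)) := by
      calc subKernel ζ σ t z s ≤ 2*K*s^(-(2*ζ+1)) * (1 - Real.exp (-t * ((1/s^2))^(α/2))) := boundA
        _ ≤ 2*K*s^(-(2*ζ+1)) * 1 := by
            apply mul_le_mul_of_nonneg_left hexp01 (by positivity)
        _ = 2*K*s^(-(2*ζ+1)) := by ring
    calc subKernel ζ σ t z s ≤ 2*K*s^(-(2*ζ+1)) := h5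
      _ ≤ (2*K + M₂ + 1) * s^(-(2*ζ+1)) := by
          apply mul_le_mul_of_nonneg_right (by linarith) (Real.rpow_nonneg hs.le _)
  -- Bound A' : subKernel ≤ 2K t s^{-(2ζ+1)-α}
  have boundA' : subKernel ζ σ t z s ≤ 2*K*t * (s^(-(2*ζ+1)) * s^(-α)) := by
    have hexp2 : 1 - Real.exp (-t * ((1/s^2))^(α/2)) ≤ t * s^(-α) := by
      rw [hsα]
      have h6 := Real.add_one_le_exp (-(t * s^(-α)))
      have : Real.exp (-t * s^(-α)) = Real.exp (-(t * s^(-α))) := by ring_nf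
      rw [this]
      linarith
    calc subKernel ζ σ t z s ≤ 2*K*s^(-(2*ζ+1)) * (1 - Real.exp (-t * ((1/s^2))^(α/2))) := boundA
      _ ≤ 2*K*s^(-(2*ζ+1)) * (t * s^(-α)) := by
          apply mul_le_mul_of_nonneg_left hexp2 (by positivity)
      _ = 2*K*t * (s^(-(2*ζ+1)) * s^(-α)) := by ring
  -- Bound B : subKernel ≤ M₂ t^{-(2ζ+1)/α}
  obtain ⟨hmomInt, hmomVal⟩ := moment α σ hα0 hσ1 hσ2 hσ3 t β₁ ht hβ₁0
  have hfh : (fun τ => besselHeat ζ τ z s * σ t τ)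
      ≤ᵐ[volume.restrict (Ioi (0:ℝ))] fun τ : ℝ => K * (τ^(-β₁) * σ t τ) := by
    filter_upwards [hposae, hnnσ] with τ hτ h1
    have hτ0 : (0:ℝ) < τ := hτ
    have hb := (hbnd τ z s hτ0 hz hzs).1
    calc besselHeat ζ τ z s * σ t τ ≤ (K * τ^(-(ζ+1/2))) * σ t τ :=
          mul_le_mul_of_nonneg_right hb h1
      _ = K * (τ^(-β₁) * σ t τ) := by rw [hβ₁]; ring
  have boundB : subKernel ζ σ t z s ≤ M₂ * t^(-(2*β₁/α)) := by
    have h7 : subKernel ζ σ t z s ≤ ∫ τ in Ioi (0:ℝ), K * (τ^(-β₁) * σ t τ) := by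
      rw [subKernel]
      exact integral_mono_of_nonneg hfnn (hmomInt.const_mul K) hfh
    have h8 : ∫ τ in Ioi (0:ℝ), K * (τ^(-β₁) * σ t τ)
        ≤ K * ((Real.Gamma β₁)⁻¹ * (t^(-(2*β₁/α)) * (2/α) * Real.Gamma (2*β₁/α))) := by
      rw [integral_const_mul]
      exact mul_le_mul_of_nonneg_left hmomVal hK.le
    calc subKernel ζ σ t z s ≤ K * ((Real.Gamma β₁)⁻¹ * (t^(-(2*β₁/α)) * (2/α) * Real.Gamma (2*β₁/α))) :=
          h7.trans h8
      _ = M₂ * t^(-(2*β₁/α)) := by rw [hM₂]; ring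
  -- combine for claim 1
  set D : ℝ := 2*ζ + 1 + α with hD
  have hD0 : 0 < D := by rw [hD]; linarith
  have hsD : (0:ℝ) < s^D := Real.rpow_pos_of_pos hs _
  have htD : (0:ℝ) < t^(D/α) := Real.rpow_pos_of_pos ht _
  have hterm1 : subKernel ζ σ t z s * s^D ≤ 2*K*t := by
    have e2 : s^(-(2*ζ+1)) * s^(-α) * s^D = 1 := by
      rw [← Real.rpow_add hs, ← Real.rpow_add hs, show -(2*ζ+1) + -α + D = 0 by rw [hD]; ring,
        Real.rpow_zero]
    calc subKernel ζ σ t z s * s^D ≤ (2*K*t * (s^(-(2*ζ+1)) * s^(-α))) * s^D := by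
          apply mul_le_mul_of_nonneg_right boundA' hsD.le
      _ = 2*K*t * (s^(-(2*ζ+1)) * s^(-α) * s^D) := by ring
      _ = 2*K*t := by rw [e2]; ring
  have hterm2 : subKernel ζ σ t z s * t^(D/α) ≤ M₂*t := by
    have e3 : t^(-(2*β₁/α)) * t^(D/α) = t := by
      rw [← Real.rpow_add ht, show -(2*β₁/α) + D/α = 1 by
        rw [hβ₁, hD]; field_simp; ring, Real.rpow_one]
    calc subKernel ζ σ t z s * t^(D/α) ≤ (M₂ * t^(-(2*β₁/α))) * t^(D/α) := by
          apply mul_le_mul_of_nonneg_right boundB htD.le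
      _ = M₂ * (t^(-(2*β₁/α)) * t^(D/α)) := by ring
      _ = M₂*t := by rw [e3]
  have claim1 : subKernel ζ σ t z s ≤ (2*K + M₂ + 1) * t / (s^D + t^(D/α)) := by
    rw [le_div_iff₀ (by positivity)]
    have : subKernel ζ σ t z s * (s^D + t^(D/α)) ≤ 2*K*t + M₂*t := by
      calc subKernel ζ σ t z s * (s^D + t^(D/α))
          = subKernel ζ σ t z s * s^D + subKernel ζ σ t z s * t^(D/α) := by ring
        _ ≤ 2*K*t + M₂*t := add_le_add hterm1 hterm2
    calc subKernel ζ σ t z s * (s^D + t^(D/α)) ≤ 2*K*t + M₂*t := this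
      _ ≤ (2*K + M₂ + 1) * t := by nlinarith
  exact ⟨claim1, claim2⟩
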